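/- If a mechanism φ is separation responsive, separation upper invariant, and separation lower invariant, then it is separation strategyproof: for every separation (R,R'), φ(R) first order-stochastically dominates φ(R') at R, and φ(R') first order-stochastically dominates φ(R) at R'. -/

import Mathlib

open Finset

/-- An ordered partition `M_1 P ... P M_K` of a finite set `α` is encoded by a rank
function `R : α → ℕ`: alternative `a` lies in class `M_{R a}` (0-indexed), and lower
rank means more preferred.  `j` is weakly preferred to `a` iff `R j ≤ R a`. -/
def classOf {α : Type} [Fintype α] (R : α → ℕ) (k : ℕ) : Finset α :=
  Finset.univ.filter fun a => R a = k

/-- `probOf x A = x_A = ∑_{a ∈ A} x_a`. -/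
def probOf {α : Type} [Fintype α] (x : α → ℝ) (A : Finset α) : ℝ := ∑ a ∈ A, x a

/-- `x` is a lottery (probability distribution) on `α`. -/
def IsLottery {α : Type} [Fintype α] (x : α → ℝ) : Prop :=
  (∀ a, 0 ≤ x a) ∧ ∑ a, x a = 1

/-- `x` first order-stochastically dominates `y` at `R`. -/
def SD {α : Type} [Fintype α] (R : α → ℕ) (x y : α → ℝ) : Prop :=
  ∀ a : α, ∑ j ∈ Finset.univ.filter (fun j => R j ≤ R a), x j ≥
           ∑ j ∈ Finset.univ.filter (fun j => R j ≤ R a), y j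

/-- A rank function is canonical if its range is an initial segment of ℕ,
i.e. all indifference classes `M_1, …, M_K` are nonempty. -/
def Canonical {α : Type} (R : α → ℕ) : Prop :=
  ∀ a : α, ∀ k, k ≤ R a → ∃ b, R b = k

/-- Strategyproofness: for all preference orders `R, R'`, `φ(R)` first
order-stochastically dominates `φ(R')` at `R`. -/
def Strategyproof {α : Type} [Fintype α] (φ : (α → ℕ) → α → ℝ) : Prop :=
  ∀ R R' : α → ℕ, Canonical R → Canonical R' → SD R (φ R) (φ R')

/-- `(R, R')` is a separation with split at index `κ`: `R'` splits the indifference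
class `M_κ` of `R` into two nonempty parts `M_κ^1 = classOf R' κ` (preferred) and
`M_κ^2 = classOf R' (κ+1)`, all other classes unchanged (classes below `κ` keep their
rank, classes above `κ` are shifted by one). -/
def IsSeparation {α : Type} [Fintype α] (R R' : α → ℕ) (κ : ℕ) : Prop :=
  Canonical R ∧
  (∀ a, R a < κ → R' a = R a) ∧
  (∀ a, R a = κ → R' a = κ ∨ R' a = κ + 1) ∧
  (∀ a, κ < R a → R' a = R a + 1) ∧
  (∃ a, R a = κ ∧ R' a = κ) ∧
  (∃ a, R a = κ ∧ R' a = κ + 1)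

/-- Separation upper invariance: the probability of every class ranked above the
split class is unchanged. -/
def SepUpperInvariant {α : Type} [Fintype α] (φ : (α → ℕ) → α → ℝ) : Prop :=
  ∀ R R' κ, IsSeparation R R' κ →
    ∀ k < κ, probOf (φ R) (classOf R k) = probOf (φ R') (classOf R k)

/-- Separation lower invariance: the probability of every class ranked below the
split class is unchanged. -/
def SepLowerInvariant {α : Type} [Fintype α] (φ : (α → ℕ) → α → ℝ) : Prop :=
  ∀ R R' κ, IsSeparation R R' κ →
    ∀ k, κ < k → probOf (φ R) (classOf R k) = probOf (φ R') (classOf R k)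

/-- Separation responsiveness: `φ_{M_κ^1}(R') ≥ φ_{M_κ^1}(R)` and
`φ_{M_κ^2}(R') ≤ φ_{M_κ^2}(R)`. -/
def SepResponsive {α : Type} [Fintype α] (φ : (α → ℕ) → α → ℝ) : Prop :=
  ∀ R R' κ, IsSeparation R R' κ →
    probOf (φ R') (classOf R' κ) ≥ probOf (φ R) (classOf R' κ) ∧
    probOf (φ R') (classOf R' (κ + 1)) ≤ probOf (φ R) (classOf R' (κ + 1))

/-- Separation directness: if the probability of some class changes under a
separation, then both the probabilities of `M_κ^1` and of `M_κ^2` change. -/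
def SepDirect {α : Type} [Fintype α] (φ : (α → ℕ) → α → ℝ) : Prop :=
  ∀ R R' κ, IsSeparation R R' κ →
    (∃ k, probOf (φ R) (classOf R k) ≠ probOf (φ R') (classOf R k)) →
    probOf (φ R') (classOf R' κ) ≠ probOf (φ R) (classOf R' κ) ∧
    probOf (φ R') (classOf R' (κ + 1)) ≠ probOf (φ R) (classOf R' (κ + 1))



lemma contour_eq_sum_classes {α : Type} [Fintype α] (x : α → ℝ) (S : α → ℕ) (n : ℕ) :
    ∑ j ∈ Finset.univ.filter (fun j => S j ≤ n), x j
      = ∑ k ∈ Finset.range (n+1), probOf x (classOf S k) := by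
  rw [← Finset.sum_fiberwise_of_maps_to (g := S) (t := Finset.range (n+1))
        (fun j hj => Finset.mem_range.2 (Nat.lt_succ_of_le (Finset.mem_filter.1 hj).2)) x]
  refine Finset.sum_congr rfl fun k hk => ?_
  unfold probOf classOf
  refine Finset.sum_congr ?_ fun _ _ => rfl
  ext j
  simp only [Finset.mem_filter, Finset.mem_univ, true_and]
  constructor
  · rintro ⟨_, h⟩; exact h
  · intro h; exact ⟨h ▸ Nat.lt_succ_iff.1 (Finset.mem_range.1 hk), h⟩

lemma total_eq_sum_classes {α : Type} [Fintype α] (x : α → ℝ) (S : α → ℕ) (N : ℕ)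
    (hN : ∀ a, S a ≤ N) :
    ∑ a, x a = ∑ k ∈ Finset.range (N+1), probOf x (classOf S k) := by
  rw [← contour_eq_sum_classes]
  congr 1
  exact (Finset.filter_true_of_mem (fun a _ => hN a)).symm

lemma contour_eq_sub {α : Type} [Fintype α] (x : α → ℝ) (S : α → ℕ) (n N : ℕ)
    (hN : ∀ a, S a ≤ N) (hn : n ≤ N) :
    ∑ j ∈ Finset.univ.filter (fun j => S j ≤ n), x j
      = (∑ a, x a) - ∑ k ∈ Finset.Ico (n+1) (N+1), probOf x (classOf S k) := by
  rw [total_eq_sum_classes x S N hN, contour_eq_sum_classes]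
  have : ∑ k ∈ Finset.range (n+1), probOf x (classOf S k)
      + ∑ k ∈ Finset.Ico (n+1) (N+1), probOf x (classOf S k)
      = ∑ k ∈ Finset.range (N+1), probOf x (classOf S k) := by
    rw [Finset.range_eq_Ico, Finset.range_eq_Ico]
    exact Finset.sum_Ico_consecutive (fun k => probOf x (classOf S k)) (Nat.zero_le _) (Nat.succ_le_succ hn)
  linarith

/-- If a mechanism is separation responsive, separation upper invariant and
separation lower invariant, then it is separation strategyproof. -/
theorem axioms_imply_separation_sp {α : Type} [Fintype α]
    (φ : (α → ℕ) → α → ℝ) (hlot : ∀ R, IsLottery (φ R))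
    (hresp : SepResponsive φ)
    (hupper : SepUpperInvariant φ) (hlower : SepLowerInvariant φ) :
    ∀ R R' κ, IsSeparation R R' κ →
      SD R (φ R) (φ R') ∧ SD R' (φ R') (φ R) := by
  intro R R' κ hsep
  obtain ⟨hcan, hlt, heqκ, hgt, _, _⟩ := hsep
  have upper := hupper R R' κ ⟨hcan, hlt, heqκ, hgt, ‹_›, ‹_›⟩
  have lower := hlower R R' κ ⟨hcan, hlt, heqκ, hgt, ‹_›, ‹_›⟩
  have resp := hresp R R' κ ⟨hcan, hlt, heqκ, hgt, ‹_›, ‹_›⟩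
  have hNR : ∀ a, R a ≤ Finset.univ.sup R := fun a => Finset.le_sup (Finset.mem_univ a)
  set N := Finset.univ.sup R with hNdef
  have hNR' : ∀ a, R' a ≤ N + 1 := by
    intro a
    rcases lt_trichotomy (R a) κ with h|h|h
    · have := hlt a h; have := hNR a; omega
    · have := hNR a; rcases heqκ a h with h'|h' <;> omega
    · have := hgt a h; have := hNR a; omega
  have t1 : ∑ a, φ R a = 1 := (hlot R).2
  have t2 : ∑ a, φ R' a = 1 := (hlot R').2
  have class_lt : ∀ k, k < κ → classOf R' k = classOf R k := by
    intro k hk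
    ext j
    simp only [classOf, Finset.mem_filter, Finset.mem_univ, true_and]
    constructor
    · intro h
      rcases lt_trichotomy (R j) κ with h1|h1|h1
      · have := hlt j h1; omega
      · rcases heqκ j h1 with h2|h2 <;> omega
      · have := hgt j h1; omega
    · intro h; have := hlt j (by omega); omega
  have class_gt : ∀ k, κ + 1 < k → classOf R' k = classOf R (k-1) := by
    intro k hk
    ext j
    simp only [classOf, Finset.mem_filter, Finset.mem_univ, true_and]
    constructor
    · intro h
      rcases lt_trichotomy (R j) κ with h1|h1|h1
      · have := hlt j h1; omega
      · rcases heqκ j h1 with h2|h2 <;> omega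
      · have := hgt j h1; omega
    · intro h; have := hgt j (by omega); omega
  constructor
  · intro a
    rcases lt_or_ge (R a) κ with h|h
    · rw [contour_eq_sum_classes, contour_eq_sum_classes]
      apply ge_of_eq
      refine Finset.sum_congr rfl fun k hk => ?_
      exact upper k (by have := Finset.mem_range.1 hk; omega)
    · rw [contour_eq_sub (φ R) R (R a) N hNR (hNR a),
          contour_eq_sub (φ R') R (R a) N hNR (hNR a), t1, t2]
      apply ge_of_eq
      have heq : ∑ k ∈ Finset.Ico (R a + 1) (N+1), probOf (φ R) (classOf R k)
          = ∑ k ∈ Finset.Ico (R a + 1) (N+1), probOf (φ R') (classOf R k) :=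
        Finset.sum_congr rfl fun k hk =>
          lower k (by have := (Finset.mem_Ico.1 hk).1; omega)
      rw [heq]
  · intro a
    rcases lt_trichotomy (R' a) κ with h|h|h
    · rw [contour_eq_sum_classes, contour_eq_sum_classes]
      apply ge_of_eq
      refine Finset.sum_congr rfl fun k hk => ?_
      have hk' : k < κ := by have := Finset.mem_range.1 hk; omega
      rw [class_lt k hk']
      exact (upper k hk').symm
    · rw [contour_eq_sum_classes, contour_eq_sum_classes, h,
          Finset.sum_range_succ, Finset.sum_range_succ]
      have h1 : ∑ k ∈ Finset.range κ, probOf (φ R') (classOf R' k)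
          = ∑ k ∈ Finset.range κ, probOf (φ R) (classOf R' k) :=
        Finset.sum_congr rfl fun k hk => by
          rw [class_lt k (Finset.mem_range.1 hk)]
          exact (upper k (Finset.mem_range.1 hk)).symm
      have h2 := resp.1
      have h3 : ∑ k ∈ Finset.range κ, probOf (φ R) (classOf R' k)
          = ∑ k ∈ Finset.range κ, probOf (φ R) (classOf R' k) := rfl
      linarith
    · rw [contour_eq_sub (φ R') R' (R' a) (N+1) hNR' (hNR' a),
          contour_eq_sub (φ R) R' (R' a) (N+1) hNR' (hNR' a), t1, t2]
      apply ge_of_eq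
      have heq : ∑ k ∈ Finset.Ico (R' a + 1) (N+2), probOf (φ R') (classOf R' k)
          = ∑ k ∈ Finset.Ico (R' a + 1) (N+2), probOf (φ R) (classOf R' k) := by
        refine Finset.sum_congr rfl fun k hk => ?_
        have hk' : κ + 1 < k := by have := (Finset.mem_Ico.1 hk).1; omega
        rw [class_gt k hk']
        exact (lower (k-1) (by omega)).symm
      rw [heq]
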